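/- Let G be a locally compact Hausdorff group with left Haar measure acting continuously on a locally compact Hausdorff space M. Then the linear span of the α-proper positive elements of C₀(M,ℂ) is dense in C₀(M,ℂ) if and only if the action of G on M is proper, i.e., the map G × M → M × M, (x,m) ↦ (x•m, m), is a proper map (preimages of compact sets are compact). -/

import Mathlib

set_option linter.unusedSectionVars false
set_option maxHeartbeats 1000000


open MeasureTheory Filter Topology
open scoped Pointwise
open scoped ZeroAtInfty BoundedContinuousFunction ComplexOrder

/-- The directed set `ℬ(G)` of bounded measurable compactly supported functions
`λ : G → ℝ` with `0 ≤ λ ≤ 1`, ordered pointwise. -/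
abbrev RieffelB (G : Type*) [TopologicalSpace G] [MeasurableSpace G] : Type _ :=
  {lam : G → ℝ // Measurable lam ∧ HasCompactSupport lam ∧ 0 ≤ lam ∧ lam ≤ 1}

/-- `p_λ(f)(m) = ∫ λ(x) f(x⁻¹ • m) dx`. -/
noncomputable def pLamC0 {G : Type*} [Group G] [TopologicalSpace G] [MeasurableSpace G]
    {M : Type*} [TopologicalSpace M] [MulAction G M]
    (μ : Measure G) (lam : RieffelB G) (f : C₀(M, ℂ)) : M → ℂ :=
  fun m => ∫ x, ((lam.1 x : ℝ) : ℂ) * f (x⁻¹ • m) ∂μ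

/-- A nonnegative `h ∈ C₀(M, ℂ)` is `α`-proper if there is `F ∈ C_b(M, ℂ)` such that
for every `k ∈ C₀(M, ℂ)` the net `(k · p_λ(h))_{λ ∈ ℬ(G)}` converges uniformly to `k · F`. -/
def IsProperC0 {G : Type*} [Group G] [TopologicalSpace G] [MeasurableSpace G]
    {M : Type*} [TopologicalSpace M] [MulAction G M]
    (μ : Measure G) (h : C₀(M, ℂ)) : Prop :=
  ∃ F : M →ᵇ ℂ, ∀ k : C₀(M, ℂ), ∀ ε > (0 : ℝ), ∃ lam₀ : RieffelB G,
    ∀ lam : RieffelB G, lam₀ ≤ lam →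
      ∀ m : M, ‖k m * pLamC0 μ lam h m - k m * F m‖ ≤ ε

section Aux

variable {G : Type*} [Group G] [TopologicalSpace G] [IsTopologicalGroup G]
    [LocallyCompactSpace G] [MeasurableSpace G] [BorelSpace G]
    (μ : Measure G) [μ.IsHaarMeasure]
    {M : Type*} [TopologicalSpace M] [LocallyCompactSpace M] [T2Space M]
    [MulAction G M] [ContinuousSMul G M]

lemma norm_apply_le_c0 (f : C₀(M, ℂ)) (m : M) : ‖f m‖ ≤ ‖f‖ := by
  rw [← ZeroAtInftyContinuousMap.norm_toBCF_eq_norm]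
  exact f.toBCF.norm_coe_le_norm m

lemma cont_orbit (f : C₀(M, ℂ)) (m : M) : Continuous fun x : G => f (x⁻¹ • m) :=
  f.continuous.comp ((continuous_inv.smul continuous_const))

/-- an indicator bound gives integrability (ℝ or ℂ valued) -/
lemma integrable_of_indicator_bound {E : Type*} [NormedAddCommGroup E] {g : G → E}
    (hg : AEStronglyMeasurable g μ)
    {C : Set G} (hC : IsCompact C) (hCl : IsClosed C) {B : ℝ}
    (hb : ∀ x, ‖g x‖ ≤ C.indicator (fun _ => B) x) : Integrable g μ := by
  refine Integrable.mono' (g := C.indicator fun _ => B) ?_ hg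
    (Filter.Eventually.of_forall hb)
  exact (integrable_indicator_iff hCl.measurableSet).2
      (integrableOn_const hC.measure_lt_top.ne)

/-- integrability of `x ↦ f (x⁻¹ • m)` given a compact "support window" -/
lemma integrable_shift {f : C₀(M, ℂ)} {m : M} {C : Set G} (hC : IsCompact C)
    (h0 : ∀ x, x ∉ C → f (x⁻¹ • m) = 0) :
    Integrable (fun x => f (x⁻¹ • m)) μ := by
  refine integrable_of_indicator_bound μ ((cont_orbit f m).aestronglyMeasurable)
    hC.closure isClosed_closure (B := ‖f‖) fun x => ?_
  by_cases hx : x ∈ closure C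
  · simpa [Set.indicator_of_mem hx] using norm_apply_le_c0 f _
  · have : x ∉ C := fun h => hx (subset_closure h)
    simp [Set.indicator_of_notMem hx, h0 x this]

lemma integrable_lam_mul (lam : RieffelB G) (f : C₀(M, ℂ)) (m : M) :
    Integrable (fun x => ((lam.1 x : ℝ) : ℂ) * f (x⁻¹ • m)) μ := by
  have hmeas : AEStronglyMeasurable (fun x => ((lam.1 x : ℝ) : ℂ) * f (x⁻¹ • m)) μ :=
    ((Complex.measurable_ofReal.comp lam.2.1).aestronglyMeasurable.mul
      ((cont_orbit f m).measurable.aestronglyMeasurable))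
  refine integrable_of_indicator_bound μ hmeas lam.2.2.1 (isClosed_tsupport _)
    (B := ‖f‖) fun x => ?_
  by_cases hx : x ∈ tsupport lam.1
  · rw [Set.indicator_of_mem hx]
    have h1 : ‖((lam.1 x : ℝ) : ℂ)‖ ≤ 1 := by
      simp only [Complex.norm_real, Real.norm_eq_abs, abs_le]
      exact ⟨le_trans (by norm_num) (lam.2.2.2.1 x), lam.2.2.2.2 x⟩
    calc ‖((lam.1 x : ℝ) : ℂ) * f (x⁻¹ • m)‖ ≤ 1 * ‖f (x⁻¹ • m)‖ := by
          rw [norm_mul]; exact mul_le_mul_of_nonneg_right h1 (norm_nonneg _)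
      _ ≤ ‖f‖ := by rw [one_mul]; exact norm_apply_le_c0 f _
  · have : lam.1 x = 0 := image_eq_zero_of_notMem_tsupport hx
    simp [Set.indicator_of_notMem hx, this]

lemma integrable_lam_mul_re (lam : RieffelB G) (f : C₀(M, ℂ)) (m : M) :
    Integrable (fun x => lam.1 x * (f (x⁻¹ • m)).re) μ := by
  have := (integrable_lam_mul μ lam f m).re
  simpa using this

/-- if `0 ≤ f` pointwise then `pLamC0` is the coercion of a real integral -/
lemma pLamC0_eq_re (lam : RieffelB G) {f : C₀(M, ℂ)} (hf : ∀ m, 0 ≤ f m) (m : M) :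
    pLamC0 μ lam f m = ((∫ x, lam.1 x * (f (x⁻¹ • m)).re ∂μ : ℝ) : ℂ) := by
  have key := integral_ofReal (𝕜 := ℂ) (μ := μ) (f := fun x => lam.1 x * (f (x⁻¹ • m)).re)
  have h2 : (fun x : G => ((lam.1 x : ℝ) : ℂ) * f (x⁻¹ • m))
      = fun x : G => ((lam.1 x * (f (x⁻¹ • m)).re : ℝ) : ℂ) := by
    funext x
    have h1 : f (x⁻¹ • m) = ((f (x⁻¹ • m)).re : ℂ) := Complex.eq_re_of_ofReal_le (by exact_mod_cast hf _)
    conv_lhs => rw [h1]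
    push_cast
    ring
  rw [pLamC0, h2]
  exact key


/-- build a `C₀` map from a continuous compactly supported function -/
noncomputable def mkC0 (f : M → ℂ) (hc : Continuous f) (hs : HasCompactSupport f) :
    C₀(M, ℂ) :=
  { toFun := f
    continuous_toFun := hc
    zero_at_infty' := hs.is_zero_at_infty }

@[simp] lemma mkC0_apply (f : M → ℂ) (hc) (hs) (m : M) : mkC0 f hc hs m = f m := rfl

/-- the indicator of a compact closed set as an element of `ℬ(G)` -/
noncomputable def indB (C : Set G) (hC : IsCompact C) (hCl : IsClosed C) : RieffelB G :=
  ⟨C.indicator 1, (measurable_one.indicator hCl.measurableSet),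
    HasCompactSupport.intro' hC hCl (fun x hx => Set.indicator_of_notMem hx _),
    fun x => Set.indicator_nonneg (fun _ _ => zero_le_one) x,
    fun x => Set.indicator_le' (fun _ _ => le_refl 1) (fun _ _ => zero_le_one) x⟩

lemma indB_apply_mem {C : Set G} (hC) (hCl) {x : G} (hx : x ∈ C) :
    (indB C hC hCl).1 x = 1 := Set.indicator_of_mem hx _

lemma indB_apply_not_mem {C : Set G} (hC) (hCl) {x : G} (hx : x ∉ C) :
    (indB C hC hCl).1 x = 0 := Set.indicator_of_notMem hx _

lemma le_indB {C : Set G} (hC) (hCl) (lam : RieffelB G) (h : tsupport lam.1 ⊆ C) :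
    lam ≤ indB C hC hCl := by
  intro x
  by_cases hx : x ∈ C
  · rw [indB_apply_mem hC hCl hx]; exact lam.2.2.2.2 x
  · have : x ∉ tsupport lam.1 := fun hh => hx (h hh)
    rw [indB_apply_not_mem hC hCl hx, image_eq_zero_of_notMem_tsupport this]

/-- `ℬ(G)` is directed -/
noncomputable def RieffelB.sup (a b : RieffelB G) : RieffelB G :=
  ⟨fun x => max (a.1 x) (b.1 x), a.2.1.max b.2.1,
    by
      refine HasCompactSupport.intro' (a.2.2.1.union b.2.2.1)
        ((isClosed_tsupport _).union (isClosed_tsupport _)) (fun x hx => ?_)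
      simp only [Set.mem_union, not_or] at hx
      rw [image_eq_zero_of_notMem_tsupport hx.1, image_eq_zero_of_notMem_tsupport hx.2,
        max_self],
    fun x => le_max_of_le_left (a.2.2.2.1 x),
    fun x => max_le (a.2.2.2.2 x) (b.2.2.2.2 x)⟩

lemma RieffelB.le_sup_left (a b : RieffelB G) : a ≤ a.sup b :=
  fun x => le_max_left _ _

lemma RieffelB.le_sup_right (a b : RieffelB G) : b ≤ a.sup b :=
  fun x => le_max_right _ _


lemma isProperC0'_of_hasCompactSupport
    (hproper : ∀ K : Set (M × M), IsCompact K →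
      IsCompact ((fun p : G × M => (p.1 • p.2, p.2)) ⁻¹' K))
    (f : C₀(M, ℂ)) (hs : HasCompactSupport ⇑f) : IsProperC0 μ f := by
  classical
  set S : Set M := tsupport ⇑f with hS
  set W : Set M → Set G :=
    fun A => closure (Prod.fst '' ((fun p : G × M => (p.1 • p.2, p.2)) ⁻¹' (A ×ˢ S))) with hWdef
  have hWc : ∀ A : Set M, IsCompact A → IsCompact (W A) := by
    intro A hA
    exact (((hproper _ (hA.prod hs)).image continuous_fst)).closure
  have hWcl : ∀ A : Set M, IsClosed (W A) := by
    intro A; rw [hWdef]; exact isClosed_closure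
  have hW0 : ∀ (A : Set M) (m : M), m ∈ A → ∀ x : G, x ∉ W A → f (x⁻¹ • m) = 0 := by
    intro A m hm x hx
    by_contra hne
    refine hx (subset_closure ?_)
    refine ⟨(x, x⁻¹ • m), ?_, rfl⟩
    refine Set.mem_preimage.2 ⟨by simpa using hm, subset_tsupport _ (Function.mem_support.mpr hne)⟩
  have hInt : ∀ m : M, Integrable (fun x => f (x⁻¹ • m)) μ := by
    intro m
    exact integrable_shift μ (hWc {m} isCompact_singleton) (hW0 {m} m rfl)
  set F : M → ℂ := fun m => ∫ x, f (x⁻¹ • m) ∂μ with hF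
  set B : ℝ := (μ (W S)).toReal * ‖f‖ with hBdef
  have hB0 : 0 ≤ B := mul_nonneg ENNReal.toReal_nonneg (norm_nonneg _)
  have hnormint : ∀ m : M, ∫ x, ‖f (x⁻¹ • m)‖ ∂μ ≤ B := by
    intro m
    by_cases hm : ∃ g : G, f (g⁻¹ • m) ≠ 0
    · obtain ⟨g, hg⟩ := hm
      have hsS : g⁻¹ • m ∈ S := subset_tsupport _ (Function.mem_support.mpr hg)
      have key := MeasureTheory.integral_mul_left_eq_self (μ := μ)
        (fun x => ‖f (x⁻¹ • m)‖) g
      have hrw : (fun x : G => ‖f ((g * x)⁻¹ • m)‖) = fun x : G => ‖f (x⁻¹ • (g⁻¹ • m))‖ := by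
        funext x; rw [mul_inv_rev, mul_smul]
      rw [hrw] at key
      rw [← key]
      have hmono : ∀ x : G, ‖f (x⁻¹ • (g⁻¹ • m))‖ ≤ (W S).indicator (fun _ => ‖f‖) x := by
        intro x
        by_cases hx : x ∈ W S
        · rw [Set.indicator_of_mem hx]; exact norm_apply_le_c0 f _
        · rw [Set.indicator_of_notMem hx, hW0 S (g⁻¹ • m) hsS x hx, norm_zero]
      calc ∫ x, ‖f (x⁻¹ • (g⁻¹ • m))‖ ∂μ
          ≤ ∫ x, (W S).indicator (fun _ => ‖f‖) x ∂μ := by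
            refine integral_mono (hInt (g⁻¹ • m)).norm ?_ hmono
            exact (integrable_indicator_iff (hWcl S).measurableSet).2
              (integrableOn_const (hWc S hs).measure_lt_top.ne)
        _ = B := by
            rw [integral_indicator_const _ (hWcl S).measurableSet, smul_eq_mul, measureReal_def]
    · push_neg at hm
      have : ∀ x : G, f (x⁻¹ • m) = 0 := fun x => hm x
      simp only [this, norm_zero, integral_zero]
      exact hB0
  have hFb : ∀ m : M, ‖F m‖ ≤ B := fun m =>
    (norm_integral_le_integral_norm _).trans (hnormint m)
  have hFcont : Continuous F := by
    rw [continuous_iff_continuousAt]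
    intro m₀
    obtain ⟨N, hNc, hN⟩ := exists_compact_mem_nhds m₀
    have hco : ContinuousOn (fun m => ∫ x, f (x⁻¹ • m) ∂μ) N := by
      apply continuousOn_integral_of_compact_support (hWc N hNc)
      · exact (f.continuous.comp (continuous_snd.inv.smul continuous_fst)).continuousOn
      · intro p x hp hx; exact hW0 N p hp x hx
    exact hco.continuousAt hN
  refine ⟨BoundedContinuousFunction.ofNormedAddCommGroup F hFcont B hFb, fun k ε hε => ?_⟩
  set ε' : ℝ := ε / (2 * B + 1) with hε'def
  have hε' : 0 < ε' := div_pos hε (by linarith)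
  have hco : ∀ᶠ m in cocompact M, ‖k m‖ < ε' := by
    have := Metric.tendsto_nhds.1 (ZeroAtInftyContinuousMapClass.zero_at_infty k) ε' hε'
    simpa [dist_zero_right] using this
  obtain ⟨A, hAc, hA⟩ := Filter.hasBasis_cocompact.eventually_iff.1 hco
  set lam₀ : RieffelB G := indB (W A) (hWc A hAc) isClosed_closure with hlam₀
  refine ⟨lam₀, fun lam hlam m => ?_⟩
  have hpnorm : ‖pLamC0 μ lam f m‖ ≤ B := by
    refine le_trans (norm_integral_le_integral_norm _) (le_trans ?_ (hnormint m))
    refine integral_mono (integrable_lam_mul μ lam f m).norm (hInt m).norm fun x => ?_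
    rw [norm_mul]
    have h1 : ‖((lam.1 x : ℝ) : ℂ)‖ ≤ 1 := by
      simp only [Complex.norm_real, Real.norm_eq_abs, abs_le]
      exact ⟨le_trans (by norm_num) (lam.2.2.2.1 x), lam.2.2.2.2 x⟩
    calc ‖((lam.1 x : ℝ) : ℂ)‖ * ‖f (x⁻¹ • m)‖ ≤ 1 * ‖f (x⁻¹ • m)‖ :=
          mul_le_mul_of_nonneg_right h1 (norm_nonneg _)
      _ = ‖f (x⁻¹ • m)‖ := one_mul _
  by_cases hm : m ∈ A
  · have hpF : pLamC0 μ lam f m = F m := by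
      refine integral_congr_ae (Filter.Eventually.of_forall fun x => ?_)
      by_cases hx : x ∈ W A
      · have h1 : lam.1 x = 1 := by
          refine le_antisymm (lam.2.2.2.2 x) ?_
          have := hlam x
          rwa [indB_apply_mem (hWc A hAc) isClosed_closure hx] at this
        simp [h1]
      · have h0 := hW0 A m hm x hx
        simp [h0]
    rw [BoundedContinuousFunction.coe_ofNormedAddCommGroup, hpF, sub_self, norm_zero]
    exact hε.le
  · have hk : ‖k m‖ ≤ ε' := (hA hm).le
    rw [BoundedContinuousFunction.coe_ofNormedAddCommGroup, ← mul_sub, norm_mul]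
    calc ‖k m‖ * ‖pLamC0 μ lam f m - F m‖
        ≤ ε' * (B + B) := by
          refine mul_le_mul hk (le_trans (norm_sub_le _ _) (add_le_add hpnorm (hFb m)))
            (norm_nonneg _) hε'.le
      _ ≤ ε' * (2 * B + 1) := by nlinarith
      _ = ε := div_mul_cancel₀ ε (by linarith)


lemma c0_norm_le {f : C₀(M, ℂ)} {C : ℝ} (hC : 0 ≤ C) (h : ∀ m, ‖f m‖ ≤ C) : ‖f‖ ≤ C := by
  rw [← ZeroAtInftyContinuousMap.norm_toBCF_eq_norm]
  exact (BoundedContinuousFunction.norm_le hC).2 h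

/-- a nonneg compactly supported "piece" as an element of the generating set -/
noncomputable def pieceC0 (u : M → ℝ) (hu : Continuous u) (g : C₀(M, ℂ))
    (hg : HasCompactSupport ⇑g) (h0 : ∀ m, g m = 0 → u m = 0) : C₀(M, ℂ) :=
  mkC0 (fun m => ((max (u m) 0 : ℝ) : ℂ))
    (Complex.continuous_ofReal.comp (hu.max continuous_const))
    (by
      refine HasCompactSupport.intro' hg (isClosed_tsupport _) (fun m hm => ?_)
      have : g m = 0 := image_eq_zero_of_notMem_tsupport hm
      rw [h0 m this, max_self, Complex.ofReal_zero])

lemma pieceC0_nonneg (u : M → ℝ) (hu) (g : C₀(M, ℂ)) (hg) (h0) (m : M) :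
    0 ≤ pieceC0 u hu g hg h0 m :=
  Complex.zero_le_real.2 (le_max_right _ _)

lemma pieceC0_hcs (u : M → ℝ) (hu) (g : C₀(M, ℂ)) (hg) (h0) :
    HasCompactSupport ⇑(pieceC0 u hu g hg h0) := by
  refine HasCompactSupport.intro' hg (isClosed_tsupport _) (fun m hm => ?_)
  have : g m = 0 := image_eq_zero_of_notMem_tsupport hm
  show ((max (u m) 0 : ℝ) : ℂ) = 0
  rw [h0 m this, max_self, Complex.ofReal_zero]

/-- any compactly supported element of `C₀` lies in the span of nonneg proper elements -/
lemma mem_span_of_hasCompactSupport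
    (hproper : ∀ K : Set (M × M), IsCompact K →
      IsCompact ((fun p : G × M => (p.1 • p.2, p.2)) ⁻¹' K))
    (g : C₀(M, ℂ)) (hg : HasCompactSupport ⇑g) :
    g ∈ Submodule.span ℂ {h : C₀(M, ℂ) | (∀ m : M, 0 ≤ h m) ∧ IsProperC0 μ h} := by
  set Sp := Submodule.span ℂ {h : C₀(M, ℂ) | (∀ m : M, 0 ≤ h m) ∧ IsProperC0 μ h} with hSp
  have hmem : ∀ (u : M → ℝ) (hu : Continuous u) (h0 : ∀ m, g m = 0 → u m = 0),
      pieceC0 u hu g hg h0 ∈ Sp := by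
    intro u hu h0
    refine Submodule.subset_span ⟨pieceC0_nonneg u hu g hg h0, ?_⟩
    exact isProperC0'_of_hasCompactSupport μ hproper _ (pieceC0_hcs u hu g hg h0)
  have hre : Continuous fun m => (g m).re := Complex.continuous_re.comp g.continuous
  have him : Continuous fun m => (g m).im := Complex.continuous_im.comp g.continuous
  have p1 : ∀ m, g m = 0 → (g m).re = 0 := fun m h => by simp [h]
  have p2 : ∀ m, g m = 0 → -(g m).re = 0 := fun m h => by simp [h]
  have p3 : ∀ m, g m = 0 → (g m).im = 0 := fun m h => by simp [h]
  have p4 : ∀ m, g m = 0 → -(g m).im = 0 := fun m h => by simp [h]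
  have e1 := hmem (fun m => (g m).re) hre p1
  have e2 := hmem (fun m => -(g m).re) hre.neg p2
  have e3 := hmem (fun m => (g m).im) him p3
  have e4 := hmem (fun m => -(g m).im) him.neg p4
  have hdecomp : g = pieceC0 _ hre g hg p1 - pieceC0 _ hre.neg g hg p2
      + Complex.I • pieceC0 _ him g hg p3 - Complex.I • pieceC0 _ him.neg g hg p4 := by
    ext m
    simp only [ZeroAtInftyContinuousMap.coe_sub, ZeroAtInftyContinuousMap.coe_add,
      ZeroAtInftyContinuousMap.coe_smul, Pi.sub_apply, Pi.add_apply, Pi.smul_apply,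
      smul_eq_mul, pieceC0, mkC0_apply]
    apply Complex.ext <;>
      simp [max_zero_sub_max_neg_zero_eq_self]
  rw [hdecomp]
  exact Submodule.sub_mem _ (Submodule.add_mem _ (Submodule.sub_mem _ e1 e2)
    (Submodule.smul_mem _ _ e3)) (Submodule.smul_mem _ _ e4)

/-- reverse direction: properness of the action implies density of the span -/
lemma dense_span_of_proper
    (hproper : ∀ K : Set (M × M), IsCompact K →
      IsCompact ((fun p : G × M => (p.1 • p.2, p.2)) ⁻¹' K)) :
    Dense (↑(Submodule.span ℂ
      {h : C₀(M, ℂ) | (∀ m : M, 0 ≤ h m) ∧ IsProperC0 μ h}) : Set C₀(M, ℂ)) := by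
  rw [Metric.dense_iff]
  intro g r hr
  have hco : ∀ᶠ m in cocompact M, ‖g m‖ < r / 2 := by
    have := Metric.tendsto_nhds.1 (ZeroAtInftyContinuousMapClass.zero_at_infty g)
      (r / 2) (by linarith)
    simpa [dist_zero_right] using this
  obtain ⟨A, hAc, hA⟩ := Filter.hasBasis_cocompact.eventually_iff.1 hco
  obtain ⟨φ, hφ1, hφ0, hφc, hφ01⟩ :=
    exists_continuous_one_zero_of_isCompact hAc isClosed_empty (Set.disjoint_empty A)
  set g' : C₀(M, ℂ) := mkC0 (fun m => (φ m : ℂ) * g m)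
    ((Complex.continuous_ofReal.comp φ.continuous).mul g.continuous)
    (by
      refine HasCompactSupport.intro' hφc (isClosed_tsupport _) (fun m hm => ?_)
      rw [image_eq_zero_of_notMem_tsupport hm, Complex.ofReal_zero, zero_mul]) with hg'
  refine ⟨g', Metric.mem_ball.2 ?_, mem_span_of_hasCompactSupport μ hproper g' (by
    refine HasCompactSupport.intro' hφc (isClosed_tsupport _) (fun m hm => ?_)
    show (φ m : ℂ) * g m = 0
    rw [image_eq_zero_of_notMem_tsupport hm, Complex.ofReal_zero, zero_mul])⟩
  have hlt : ‖g' - g‖ ≤ r / 2 := by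
    refine c0_norm_le (by linarith) fun m => ?_
    have hval : (g' - g) m = ((φ m : ℂ) - 1) * g m := by
      simp only [ZeroAtInftyContinuousMap.coe_sub, Pi.sub_apply, hg', mkC0_apply]
      ring
    rw [hval, norm_mul]
    by_cases hm : m ∈ A
    · rw [hφ1 hm]
      simp
      positivity
    · have h1 : ‖((φ m : ℂ) - 1)‖ ≤ 1 := by
        rw [show ((φ m : ℂ) - 1) = ((φ m - 1 : ℝ) : ℂ) by push_cast; ring]
        rw [Complex.norm_real, Real.norm_eq_abs, abs_le]
        have := hφ01 m
        constructor <;> [linarith [this.1, this.2]; linarith [this.1, this.2]]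
      calc ‖((φ m : ℂ) - 1)‖ * ‖g m‖ ≤ 1 * ‖g m‖ :=
            mul_le_mul_of_nonneg_right h1 (norm_nonneg _)
        _ ≤ r / 2 := by rw [one_mul]; exact (hA hm).le
  rw [dist_eq_norm]
  calc ‖g' - g‖ ≤ r / 2 := hlt
    _ < r := by linarith


/-- the parametrized integral used throughout the forward direction -/
noncomputable def Qint (μ : Measure G) (lam : RieffelB G) (j : C₀(M, ℂ)) (m : M) : ℝ :=
  ∫ x, lam.1 x * (j (x⁻¹ • m)).re ∂μ

lemma Qint_nonneg (lam : RieffelB G) {j : C₀(M, ℂ)} (hj : ∀ m, 0 ≤ j m) (m : M) :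
    0 ≤ Qint μ lam j m :=
  integral_nonneg fun x => mul_nonneg (lam.2.2.2.1 x) (Complex.nonneg_iff.1 (hj _)).1

lemma Qint_mono {lam lam' : RieffelB G} (h : lam ≤ lam') {j : C₀(M, ℂ)}
    (hj : ∀ m, 0 ≤ j m) (m : M) : Qint μ lam j m ≤ Qint μ lam' j m := by
  refine integral_mono (integrable_lam_mul_re μ lam j m) (integrable_lam_mul_re μ lam' j m)
    fun x => ?_
  exact mul_le_mul_of_nonneg_right (h x) (Complex.nonneg_iff.1 (hj _)).1

lemma pLamC0_eq_Qint (lam : RieffelB G) {j : C₀(M, ℂ)} (hj : ∀ m, 0 ≤ j m) (m : M) :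
    pLamC0 μ lam j m = ((Qint μ lam j m : ℝ) : ℂ) :=
  pLamC0_eq_re μ lam hj m

/-- main estimate extraction: at points where `k = 1` -/
lemma Qint_close {j : C₀(M, ℂ)} (hj : ∀ m, 0 ≤ j m) {Fj : M →ᵇ ℂ} {k : C₀(M, ℂ)}
    {ε : ℝ} {lam : RieffelB G} {m : M} (hk : k m = 1)
    (hb : ‖k m * pLamC0 μ lam j m - k m * Fj m‖ ≤ ε) :
    |Qint μ lam j m - (Fj m).re| ≤ ε := by
  rw [hk, one_mul, one_mul, pLamC0_eq_Qint μ lam hj m] at hb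
  refine le_trans ?_ hb
  have := Complex.abs_re_le_norm (((Qint μ lam j m : ℝ) : ℂ) - Fj m)
  simpa using this

lemma Qint_indB_add {C D : Set G} (hC : IsCompact C) (hCl : IsClosed C)
    (hD : IsCompact D) (hDl : IsClosed D) (hdisj : Disjoint C D) (j : C₀(M, ℂ)) (m : M) :
    Qint μ (indB (C ∪ D) (hC.union hD) (hCl.union hDl)) j m
      = Qint μ (indB C hC hCl) j m + Qint μ (indB D hD hDl) j m := by
  show (∫ x, (C ∪ D).indicator 1 x * (j (x⁻¹ • m)).re ∂μ)
    = (∫ x, C.indicator 1 x * (j (x⁻¹ • m)).re ∂μ)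
      + (∫ x, D.indicator 1 x * (j (x⁻¹ • m)).re ∂μ)
  rw [← integral_add
    (show Integrable (fun x => C.indicator 1 x * (j (x⁻¹ • m)).re) μ from
      integrable_lam_mul_re μ (indB C hC hCl) j m)
    (show Integrable (fun x => D.indicator 1 x * (j (x⁻¹ • m)).re) μ from
      integrable_lam_mul_re μ (indB D hD hDl) j m)]
  refine integral_congr_ae (Filter.Eventually.of_forall fun y => ?_)
  show (C ∪ D).indicator 1 y * (j (y⁻¹ • m)).re = _
  rw [Set.indicator_union_of_disjoint hdisj]
  simp [add_mul]

lemma Qint_indB_shift {x : G} {C : Set G} (hC : IsCompact C) (hCl : IsClosed C)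
    (hC' : IsCompact ((fun y => x * y) ⁻¹' C)) (hCl' : IsClosed ((fun y => x * y) ⁻¹' C))
    (j : C₀(M, ℂ)) (m : M) :
    Qint μ (indB ((fun y => x * y) ⁻¹' C) hC' hCl') j m
      = Qint μ (indB C hC hCl) j (x • m) := by
  show (∫ y, ((fun y => x * y) ⁻¹' C).indicator 1 y * (j (y⁻¹ • m)).re ∂μ)
    = ∫ y, C.indicator 1 y * (j (y⁻¹ • (x • m))).re ∂μ
  rw [← MeasureTheory.integral_mul_left_eq_self (μ := μ)
    (fun y => C.indicator 1 y * (j (y⁻¹ • (x • m))).re) x]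
  refine integral_congr_ae (Filter.Eventually.of_forall fun y => ?_)
  show ((fun y => x * y) ⁻¹' C).indicator 1 y * (j (y⁻¹ • m)).re
    = C.indicator 1 (x * y) * (j ((x * y)⁻¹ • (x • m))).re
  have e1 : ((fun y => x * y) ⁻¹' C).indicator (1 : G → ℝ) y = C.indicator 1 (x * y) := by
    by_cases hy : y ∈ (fun y => x * y) ⁻¹' C
    · rw [Set.indicator_of_mem hy, Set.indicator_of_mem (by exact hy)]; rfl
    · rw [Set.indicator_of_notMem hy, Set.indicator_of_notMem (by exact hy)]
  have e2 : (x * y)⁻¹ • (x • m) = y⁻¹ • m := by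
    rw [mul_inv_rev, mul_smul, inv_smul_smul]
  rw [e1, e2]

/-- forward direction : density of the span forces properness of the action -/
lemma proper_action_of_dense
    (hdense : Dense (↑(Submodule.span ℂ
        {h : C₀(M, ℂ) | (∀ m : M, 0 ≤ h m) ∧ IsProperC0 μ h}) : Set C₀(M, ℂ))) :
    ∀ K : Set (M × M), IsCompact K →
      IsCompact ((fun p : G × M => (p.1 • p.2, p.2)) ⁻¹' K) := by
  classical
  intro K hK
  by_contra hP
  set act : G × M → M × M := fun p => (p.1 • p.2, p.2) with hact
  have hactc : Continuous act := (continuous_fst.smul continuous_snd).prodMk continuous_snd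
  have hPcl : IsClosed (act ⁻¹' K) := hK.isClosed.preimage hactc
  set L1 : Set M := Prod.fst '' K with hL1
  set L2 : Set M := Prod.snd '' K with hL2
  have hL1c : IsCompact L1 := hK.image continuous_fst
  have hL2c : IsCompact L2 := hK.image continuous_snd
  set L : Set M := L1 ∪ L2 with hL
  have hLc : IsCompact L := hL1c.union hL2c
  -- escape to infinity in the group direction
  have hesc : ∀ C : Set G, IsCompact C → ∃ x : G, ∃ m : M, (x • m, m) ∈ K ∧ x ∉ C := by
    intro C hC
    by_contra hcon
    push_neg at hcon
    refine hP (IsCompact.of_isClosed_subset (hC.prod hL2c) hPcl fun p hp => ?_)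
    exact ⟨hcon p.1 p.2 hp, ⟨(p.1 • p.2, p.2), hp, rfl⟩⟩
  -- Urysohn function which is 1 on L
  obtain ⟨φ, hφ1, -, hφc, hφ01⟩ :=
    exists_continuous_one_zero_of_isCompact hLc isClosed_empty (Set.disjoint_empty L)
  set fC : C₀(M, ℂ) := mkC0 (fun m => (φ m : ℂ))
    (Complex.continuous_ofReal.comp φ.continuous)
    (by
      refine HasCompactSupport.intro' hφc (isClosed_tsupport _) fun m hm => ?_
      rw [image_eq_zero_of_notMem_tsupport hm, Complex.ofReal_zero]) with hfC
  -- approximate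
  obtain ⟨h, hball, hspan⟩ := Metric.dense_iff.1 hdense fC (1/4) (by norm_num)
  obtain ⟨c, hcsupp, hcsum⟩ := Submodule.mem_span_set.1 (SetLike.mem_coe.1 hspan)
  have hprop : ∀ j ∈ c.support, (∀ m : M, 0 ≤ j m) ∧ IsProperC0 μ j :=
    fun j hj => hcsupp hj
  -- the cluster point n₀
  have : Nonempty {C : Set G // IsCompact C} := ⟨⟨∅, isCompact_empty⟩⟩
  set T : {C : Set G // IsCompact C} → Set M :=
    fun C => closure {n | ∃ x : G, ∃ m : M, (x • m, m) ∈ K ∧ x ∉ C.1 ∧ n = x • m} with hT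
  have hTsub : ∀ C, T C ⊆ L1 := by
    intro C
    refine closure_minimal ?_ hL1c.isClosed
    rintro n ⟨x, m, hKm, -, rfl⟩
    exact ⟨(x • m, m), hKm, rfl⟩
  have hTne : ∀ C, (T C).Nonempty := by
    intro C
    obtain ⟨x, m, hKm, hx⟩ := hesc C.1 C.2
    exact ⟨x • m, subset_closure ⟨x, m, hKm, hx, rfl⟩⟩
  obtain ⟨n₀, hn₀⟩ := IsCompact.nonempty_iInter_of_directed_nonempty_isCompact_isClosed T
    (fun C D => ⟨⟨C.1 ∪ D.1, C.2.union D.2⟩,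
      closure_mono (fun n => by
        rintro ⟨x, m, hKm, hx, rfl⟩
        exact ⟨x, m, hKm, fun hxc => hx (Or.inl hxc), rfl⟩),
      closure_mono (fun n => by
        rintro ⟨x, m, hKm, hx, rfl⟩
        exact ⟨x, m, hKm, fun hxc => hx (Or.inr hxc), rfl⟩)⟩)
    hTne
    (fun C => IsCompact.of_isClosed_subset hL1c isClosed_closure (hTsub C))
    (fun C => isClosed_closure)
  have hn₀T : ∀ C : {C : Set G // IsCompact C}, n₀ ∈ T C := by
    intro C; exact Set.mem_iInter.1 hn₀ C
  have hn₀L : n₀ ∈ L := Or.inl (hTsub ⟨∅, isCompact_empty⟩ (hn₀T _))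
  have hφn₀ : fC n₀ = 1 := by
    show ((φ n₀ : ℝ) : ℂ) = 1
    rw [hφ1 hn₀L]; norm_num
  -- Claim A : each Fⱼ has nonpositive real part at n₀
  have claimA : ∀ j ∈ c.support, ∀ Fj : M →ᵇ ℂ,
      (∀ k : C₀(M, ℂ), ∀ ε > (0 : ℝ), ∃ lam₀ : RieffelB G,
        ∀ lam : RieffelB G, lam₀ ≤ lam →
          ∀ m : M, ‖k m * pLamC0 μ lam j m - k m * Fj m‖ ≤ ε) →
      (Fj n₀).re ≤ 0 := by
    intro j hj Fj hFj
    have hjpos := (hprop j hj).1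
    have key : ∀ ε > (0 : ℝ), (Fj n₀).re ≤ 3 * ε := by
      intro ε hε
      obtain ⟨lam₀, hlam₀⟩ := hFj fC ε hε
      set C₀ : Set G := tsupport lam₀.1 with hC₀
      have hC₀c : IsCompact C₀ := lam₀.2.2.1
      have hC₀cl : IsClosed C₀ := isClosed_tsupport _
      have hDc : IsCompact (C₀ * C₀⁻¹) := hC₀c.mul hC₀c.inv
      -- on the escape set, Fj is ≤ 3ε
      have hsubset : {n | ∃ x : G, ∃ m : M, (x • m, m) ∈ K ∧ x ∉ C₀ * C₀⁻¹ ∧ n = x • m}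
          ⊆ {n | (Fj n).re ≤ 3 * ε} := by
        rintro n ⟨x, m, hKm, hx, rfl⟩
        have hmL : m ∈ L := Or.inr ⟨(x • m, m), hKm, rfl⟩
        have hnL : x • m ∈ L := Or.inl ⟨(x • m, m), hKm, rfl⟩
        have hφm : fC m = 1 := by show ((φ m : ℝ) : ℂ) = 1; rw [hφ1 hmL]; norm_num
        have hφn : fC (x • m) = 1 := by
          show ((φ (x • m) : ℝ) : ℂ) = 1; rw [hφ1 hnL]; norm_num
        set D' : Set G := (fun y => x * y) ⁻¹' C₀ with hD'
        have hD'c : IsCompact D' := (Homeomorph.mulLeft x).isCompact_preimage.2 hC₀c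
        have hD'cl : IsClosed D' := hC₀cl.preimage (continuous_mul_left x)
        have hdisj : Disjoint C₀ D' := by
          rw [Set.disjoint_left]
          intro y hy hy'
          refine hx ?_
          exact ⟨x * y, hy', y⁻¹, Set.inv_mem_inv.2 hy, by group⟩
        set lamC : RieffelB G := indB C₀ hC₀c hC₀cl with hlamC
        set lamU : RieffelB G := indB (C₀ ∪ D') (hC₀c.union hD'c) (hC₀cl.union hD'cl)
          with hlamU
        have hgeC : lam₀ ≤ lamC := le_indB _ _ _ subset_rfl
        have hgeU : lam₀ ≤ lamU := le_indB _ _ _ Set.subset_union_left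
        have b1 : |Qint μ lamU j m - (Fj m).re| ≤ ε :=
          Qint_close μ hjpos hφm (hlam₀ lamU hgeU m)
        have b2 : |Qint μ lamC j m - (Fj m).re| ≤ ε :=
          Qint_close μ hjpos hφm (hlam₀ lamC hgeC m)
        have b3 : |Qint μ lamC j (x • m) - (Fj (x • m)).re| ≤ ε :=
          Qint_close μ hjpos hφn (hlam₀ lamC hgeC (x • m))
        set lamD : RieffelB G := indB D' hD'c hD'cl with hlamD
        have hadd : Qint μ lamU j m = Qint μ lamC j m + Qint μ lamD j m := by
          rw [hlamU, hlamC, hlamD]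
          exact Qint_indB_add μ hC₀c hC₀cl hD'c hD'cl hdisj j m
        have hshift : Qint μ lamD j m = Qint μ lamC j (x • m) := by
          rw [hlamD, hlamC]
          exact Qint_indB_shift μ hC₀c hC₀cl hD'c hD'cl j m
        have b1' := abs_le.1 b1
        have b2' := abs_le.1 b2
        have b3' := abs_le.1 b3
        simp only [Set.mem_setOf_eq]
        linarith [b1'.1, b1'.2, b2'.1, b2'.2, b3'.1, b3'.2]
      have hclosed : IsClosed {n : M | (Fj n).re ≤ 3 * ε} :=
        IsClosed.preimage (Complex.continuous_re.comp Fj.continuous) isClosed_Iic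
      have := hn₀T ⟨C₀ * C₀⁻¹, hDc⟩
      rw [hT] at this
      exact closure_minimal hsubset hclosed this
    by_contra hcon
    push_neg at hcon
    have := key ((Fj n₀).re / 4) (by linarith)
    linarith
  -- Claim B : each generator vanishes at n₀
  have claimB : ∀ j ∈ c.support, j n₀ = 0 := by
    intro j hj
    have hjpos := (hprop j hj).1
    obtain ⟨Fj, hFj⟩ := (hprop j hj).2
    have hFre : (Fj n₀).re ≤ 0 := claimA j hj Fj hFj
    have hQ0 : ∀ lam : RieffelB G, Qint μ lam j n₀ = 0 := by
      intro lam
      refine le_antisymm ?_ (Qint_nonneg μ lam hjpos n₀)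
      have : ∀ ε > (0 : ℝ), Qint μ lam j n₀ ≤ ε := by
        intro ε hε
        obtain ⟨lam₀, hlam₀⟩ := hFj fC ε hε
        have hb : |Qint μ (lam.sup lam₀) j n₀ - (Fj n₀).re| ≤ ε :=
          Qint_close μ hjpos hφn₀ (hlam₀ (lam.sup lam₀) (RieffelB.le_sup_right _ _) n₀)
        have hmono := Qint_mono μ (RieffelB.le_sup_left lam lam₀) hjpos n₀
        have := (abs_le.1 hb).2
        linarith
      by_contra hcon
      push_neg at hcon
      have := this (Qint μ lam j n₀ / 2) (by linarith)
      linarith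
    by_contra hne
    have him : (j n₀).im = 0 := ((Complex.nonneg_iff.1 (hjpos n₀)).2).symm
    have hrepos : 0 < (j n₀).re := by
      rcases lt_or_eq_of_le (Complex.nonneg_iff.1 (hjpos n₀)).1 with h | h
      · exact h
      · exact absurd (Complex.ext h.symm him) hne
    set g : G → ℝ := fun y => (j (y⁻¹ • n₀)).re with hg
    have hgc : Continuous g := Complex.continuous_re.comp (cont_orbit j n₀)
    have hg1 : g 1 = (j n₀).re := by rw [hg]; simp
    set U : Set G := g ⁻¹' Set.Ioi ((j n₀).re / 2) with hU
    have hUo : IsOpen U := IsOpen.preimage hgc isOpen_Ioi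
    have h1U : (1 : G) ∈ U := by
      simp only [hU, Set.mem_preimage, Set.mem_Ioi, hg1]
      linarith
    obtain ⟨V, hVc, hVcl, hV1, hVU⟩ :=
      exists_compact_closed_between isCompact_singleton hUo (by simpa using h1U)
    have hμV : 0 < (μ V).toReal := by
      refine ENNReal.toReal_pos (fun h0 => ?_) hVc.measure_lt_top.ne
      have hpos : 0 < μ (interior V) :=
        (isOpen_interior.measure_pos μ ⟨1, by simpa using hV1 rfl⟩)
      exact absurd (le_antisymm (le_trans (measure_mono interior_subset) h0.le) zero_le)
        hpos.ne'
    have hlower : (μ V).toReal * ((j n₀).re / 2) ≤ Qint μ (indB V hVc hVcl) j n₀ := by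
      have := integral_indicator_const ((j n₀).re / 2) hVcl.measurableSet (μ := μ)
      rw [← smul_eq_mul, ← measureReal_def, ← this]
      refine integral_mono ?_ (integrable_lam_mul_re μ (indB V hVc hVcl) j n₀) fun y => ?_
      · exact (integrable_indicator_iff hVcl.measurableSet).2
          (integrableOn_const hVc.measure_lt_top.ne)
      · by_cases hy : y ∈ V
        · rw [Set.indicator_of_mem hy]
          have : (j n₀).re / 2 ≤ g y := le_of_lt (hVU hy)
          calc ((j n₀).re / 2 : ℝ) ≤ g y := this
            _ = 1 * g y := (one_mul _).symm
            _ = (indB V hVc hVcl).1 y * (j (y⁻¹ • n₀)).re := by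
                rw [indB_apply_mem hVc hVcl hy]
        · rw [Set.indicator_of_notMem hy]
          exact mul_nonneg ((indB V hVc hVcl).2.2.2.1 y)
            (Complex.nonneg_iff.1 (hjpos _)).1
    rw [hQ0 (indB V hVc hVcl)] at hlower
    nlinarith
  -- conclusion
  have hvanish : h n₀ = 0 := by
    have : h n₀ = ∑ j ∈ c.support, c j • j n₀ := by
      rw [← hcsum]
      rw [Finsupp.sum]
      have : ((∑ j ∈ c.support, c j • j : C₀(M, ℂ))) n₀ = ∑ j ∈ c.support, (c j • j) n₀ :=
        map_sum (AddMonoidHom.mk' (fun f : C₀(M, ℂ) => f n₀) (fun f g => rfl)) _ _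
      simpa using this
    rw [this]
    refine Finset.sum_eq_zero fun j hj => ?_
    rw [claimB j hj, smul_zero]
  have hdist : dist h fC < 1/4 := Metric.mem_ball.1 hball
  have hnorm : ‖(h - fC) n₀‖ ≤ ‖h - fC‖ := norm_apply_le_c0 _ _
  rw [← dist_eq_norm] at hnorm
  have hval : (h - fC) n₀ = -1 := by
    simp only [ZeroAtInftyContinuousMap.coe_sub, Pi.sub_apply, hvanish, hφn₀]
    ring
  rw [hval] at hnorm
  simp only [norm_neg, norm_one] at hnorm
  linarith

end Aux

/-- For a continuous action of `G` on a locally compact Hausdorff space `M`,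
the span of the `α`-proper nonnegative elements of `C₀(M, ℂ)` is dense in `C₀(M, ℂ)` iff
the action of `G` on `M` is proper (preimages of compact sets under
`(x, m) ↦ (x • m, m)` are compact). -/
theorem stmt7
    {G : Type*} [Group G] [TopologicalSpace G] [IsTopologicalGroup G]
    [LocallyCompactSpace G] [MeasurableSpace G] [BorelSpace G]
    (μ : Measure G) [μ.IsHaarMeasure]
    {M : Type*} [TopologicalSpace M] [LocallyCompactSpace M] [T2Space M]
    [MulAction G M] [ContinuousSMul G M] :
    Dense (↑(Submodule.span ℂ
        {h : C₀(M, ℂ) | (∀ m : M, 0 ≤ h m) ∧ IsProperC0 μ h}) : Set C₀(M, ℂ)) ↔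
      (∀ K : Set (M × M), IsCompact K →
        IsCompact ((fun p : G × M => (p.1 • p.2, p.2)) ⁻¹' K)) :=
  ⟨proper_action_of_dense μ, dense_span_of_proper μ⟩
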